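/- Let M be a real symmetric positive semidefinite n×n matrix with eigenvalues 0 ≤ μ₁ ≤ … ≤ μₙ and orthonormal eigenbasis v₁,…,vₙ. Let x₀ ∈ ℝⁿ, ε > 0, k ≥ log(n)/ε, and x_k = M^k x₀ with x_k ≠ 0. Then (x_kᵀ M x_k)/(x_kᵀ x_k) ≥ (1-ε)·μₙ · 1/(1 + (‖x₀‖²/⟨x₀,vₙ⟩²)·(1-ε)^{2k}), provided ⟨x₀, vₙ⟩ ≠ 0. -/

import Mathlib

open Matrix Finset

/-- completeness relation: ∑ i, v i a * v i b = δ. -/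
lemma aux_complete {n : ℕ} (v : Fin n → Fin n → ℝ)
    (horth : ∀ i j, v i ⬝ᵥ v j = if i = j then (1 : ℝ) else 0)
    (a b : Fin n) : ∑ i, v i a * v i b = if a = b then (1 : ℝ) else 0 := by
  have h1 : (Matrix.of v) * (Matrix.of v)ᵀ = 1 := by
    ext i j
    simpa [Matrix.mul_apply, Matrix.one_apply, dotProduct] using horth i j
  have h2 : (Matrix.of v)ᵀ * (Matrix.of v) = 1 := mul_eq_one_comm.mp h1
  have := congrFun (congrFun h2 a) b
  simpa [Matrix.mul_apply, Matrix.one_apply] using this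

/-- expansion in the orthonormal basis -/
lemma aux_expand {n : ℕ} (v : Fin n → Fin n → ℝ)
    (horth : ∀ i j, v i ⬝ᵥ v j = if i = j then (1 : ℝ) else 0)
    (x : Fin n → ℝ) : x = ∑ i, (x ⬝ᵥ v i) • v i := by
  funext j
  have h : (∑ i, (x ⬝ᵥ v i) • v i) j = ∑ i, ∑ a, x a * (v i a * v i j) := by
    simp [dotProduct, Finset.sum_mul, mul_assoc]
  rw [h, Finset.sum_comm]
  simp_rw [← Finset.mul_sum, aux_complete v horth]
  simp

/-- dot product of two expansions -/
lemma aux_dot {n : ℕ} (v : Fin n → Fin n → ℝ)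
    (horth : ∀ i j, v i ⬝ᵥ v j = if i = j then (1 : ℝ) else 0)
    (a b : Fin n → ℝ) :
    (∑ i, a i • v i) ⬝ᵥ (∑ i, b i • v i) = ∑ i, a i * b i := by
  simp only [dotProduct, Finset.sum_apply, Pi.smul_apply, smul_eq_mul]
  have h : ∀ x : Fin n, (∑ i, a i * v i x) * (∑ j, b j * v j x)
      = ∑ i, ∑ j, a i * b j * (v i x * v j x) := by
    intro x
    rw [Finset.sum_mul_sum]
    apply Finset.sum_congr rfl; intro i _
    apply Finset.sum_congr rfl; intro j _
    ring
  simp_rw [h]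
  rw [Finset.sum_comm]
  have h2 : ∀ i : Fin n, ∑ x, ∑ j, a i * b j * (v i x * v j x)
      = ∑ j, a i * b j * (if i = j then (1:ℝ) else 0) := by
    intro i
    rw [Finset.sum_comm]
    apply Finset.sum_congr rfl; intro j _
    have hd := horth i j
    simp only [dotProduct] at hd
    rw [← Finset.mul_sum, hd]
  simp_rw [h2]
  simp

/-- Power-method progress lemma: lower bound on the Rayleigh quotient of `M^k x₀`. -/
theorem stmt4 {n : ℕ} (hn : 0 < n) (M : Matrix (Fin n) (Fin n) ℝ)
    (hM : M.PosSemidef)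
    (μ : Fin n → ℝ) (v : Fin n → Fin n → ℝ)
    (hmono : Monotone μ)
    (horth : ∀ i j, v i ⬝ᵥ v j = if i = j then (1 : ℝ) else 0)
    (heig : ∀ i, M *ᵥ v i = μ i • v i)
    (x₀ : Fin n → ℝ) (ε : ℝ) (hε : 0 < ε) (k : ℕ)
    (hk : Real.log n / ε ≤ (k : ℝ))
    (xk : Fin n → ℝ) (hxk : xk = (M ^ k) *ᵥ x₀) (hxkne : xk ≠ 0)
    (hx0 : x₀ ⬝ᵥ v ⟨n - 1, by omega⟩ ≠ 0) :
    (1 - ε) * μ ⟨n - 1, by omega⟩ *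
        (1 / (1 + (x₀ ⬝ᵥ x₀) / (x₀ ⬝ᵥ v ⟨n - 1, by omega⟩) ^ 2 * (1 - ε) ^ (2 * k))) ≤
      xk ⬝ᵥ M *ᵥ xk / (xk ⬝ᵥ xk) := by
  classical
  have hn1 : n - 1 < n := by omega
  set top : Fin n := ⟨n - 1, hn1⟩ with htopdef
  show (1 - ε) * μ top *
        (1 / (1 + (x₀ ⬝ᵥ x₀) / (x₀ ⬝ᵥ v top) ^ 2 * (1 - ε) ^ (2 * k))) ≤
      xk ⬝ᵥ M *ᵥ xk / (xk ⬝ᵥ xk)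
  have hx0' : x₀ ⬝ᵥ v top ≠ 0 := hx0
  -- eigenvalues are nonnegative
  have hμ0 : ∀ i, 0 ≤ μ i := by
    intro i
    have h1 := hM.dotProduct_mulVec_nonneg (v i)
    rw [heig i] at h1
    have h2 : v i ⬝ᵥ v i = 1 := by simpa using horth i i
    simpa [dotProduct_smul, h2, star] using h1
  -- iterated eigenvector equation
  have heigk : ∀ (m : ℕ) i, (M ^ m) *ᵥ v i = (μ i ^ m) • v i := by
    intro m i
    induction m with
    | zero => simp
    | succ m ih =>
      rw [pow_succ, ← Matrix.mulVec_mulVec, heig i, Matrix.mulVec_smul, ih,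
        smul_smul, pow_succ]
      ring_nf
  have hsum : ∀ (A : Matrix (Fin n) (Fin n) ℝ) (f : Fin n → Fin n → ℝ),
      A *ᵥ (∑ i, f i) = ∑ i, A *ᵥ f i := by
    intro A f
    have h := map_sum A.mulVecLin f Finset.univ
    simpa only [Matrix.mulVecLin_apply] using h
  -- expansions
  have hxke : xk = ∑ i, ((x₀ ⬝ᵥ v i) * μ i ^ k) • v i := by
    rw [hxk]
    conv_lhs => rw [aux_expand v horth x₀]
    rw [hsum]
    refine Finset.sum_congr rfl fun i _ => ?_
    rw [Matrix.mulVec_smul, heigk k i, smul_smul]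
  have hMxke : M *ᵥ xk = ∑ i, ((x₀ ⬝ᵥ v i) * μ i ^ (k + 1)) • v i := by
    rw [hxke, hsum]
    refine Finset.sum_congr rfl fun i _ => ?_
    rw [Matrix.mulVec_smul, heig i, smul_smul]
    congr 1
    ring
  -- dot products
  have hNum : xk ⬝ᵥ (M *ᵥ xk) = ∑ i, (x₀ ⬝ᵥ v i) ^ 2 * μ i ^ (2 * k) * μ i := by
    rw [hMxke, hxke, aux_dot v horth]
    refine Finset.sum_congr rfl fun i _ => ?_
    ring
  have hD : xk ⬝ᵥ xk = ∑ i, (x₀ ⬝ᵥ v i) ^ 2 * μ i ^ (2 * k) := by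
    rw [hxke, aux_dot v horth]
    refine Finset.sum_congr rfl fun i _ => ?_
    ring
  have hX : x₀ ⬝ᵥ x₀ = ∑ i, (x₀ ⬝ᵥ v i) ^ 2 := by
    conv_lhs => rw [aux_expand v horth x₀, aux_dot v horth]
    refine Finset.sum_congr rfl fun i _ => ?_
    ring
  -- positivity facts
  have hDnn : (0:ℝ) ≤ xk ⬝ᵥ xk := by
    rw [dotProduct]
    exact Finset.sum_nonneg fun i _ => mul_self_nonneg _
  have hDpos : (0:ℝ) < xk ⬝ᵥ xk :=
    lt_of_le_of_ne hDnn (fun h => hxkne (dotProduct_self_eq_zero.mp h.symm))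
  have hNumnn : (0:ℝ) ≤ xk ⬝ᵥ (M *ᵥ xk) := by
    have := hM.dotProduct_mulVec_nonneg xk
    simpa [star] using this
  have hXnn : (0:ℝ) ≤ x₀ ⬝ᵥ x₀ := by
    rw [dotProduct]
    exact Finset.sum_nonneg fun i _ => mul_self_nonneg _
  have hc2 : (0:ℝ) < (x₀ ⬝ᵥ v top) ^ 2 := by positivity
  have hpow : (0:ℝ) ≤ (1 - ε) ^ (2 * k) := (even_two_mul k).pow_nonneg _
  have hq0 : (0:ℝ) ≤ (x₀ ⬝ᵥ x₀) / (x₀ ⬝ᵥ v top) ^ 2 * (1 - ε) ^ (2 * k) :=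
    mul_nonneg (div_nonneg hXnn hc2.le) hpow
  have h1q : (0:ℝ) < 1 + (x₀ ⬝ᵥ x₀) / (x₀ ⬝ᵥ v top) ^ 2 * (1 - ε) ^ (2 * k) := by linarith
  have hrhs : (0:ℝ) ≤ xk ⬝ᵥ M *ᵥ xk / (xk ⬝ᵥ xk) := div_nonneg hNumnn hDnn
  rcases le_or_gt 1 ε with hε1 | hε1
  · -- degenerate case ε ≥ 1 : LHS ≤ 0
    refine le_trans ?_ hrhs
    have h1 : (1:ℝ) - ε ≤ 0 := by linarith
    have h2 : (1:ℝ) - ε ≤ 0 → (1 - ε) * μ top ≤ 0 :=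
      fun h => mul_nonpos_iff.mpr (Or.inr ⟨h, hμ0 top⟩)
    have h3 : 0 ≤ 1 / (1 + (x₀ ⬝ᵥ x₀) / (x₀ ⬝ᵥ v top) ^ 2 * (1 - ε) ^ (2 * k)) :=
      by positivity
    exact mul_nonpos_iff.mpr (Or.inr ⟨h2 h1, h3⟩)
  rcases eq_or_lt_of_le (hμ0 top) with hμt | hμt
  · -- degenerate case μ top = 0 : LHS = 0
    rw [← hμt, mul_zero, zero_mul]
    exact hrhs
  -- main case
  set t := μ top with ht
  have hμle : ∀ i, μ i ≤ t := by
    intro i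
    refine hmono ?_
    rw [Fin.le_def]
    have := i.isLt
    simp only [htopdef]
    omega
  set S : Finset (Fin n) := Finset.univ.filter (fun i => (1 - ε) * t ≤ μ i) with hS
  set f : Fin n → ℝ := fun i => (x₀ ⬝ᵥ v i) ^ 2 * μ i ^ (2 * k) with hf
  have hfnn : ∀ i, 0 ≤ f i := fun i =>
    mul_nonneg (sq_nonneg _) (pow_nonneg (hμ0 i) _)
  have htopS : top ∈ S := by
    rw [hS, Finset.mem_filter]
    refine ⟨Finset.mem_univ _, ?_⟩
    nlinarith [hμt, hε]
  set Big := ∑ i ∈ S, f i with hBig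
  set Small := ∑ i ∈ Finset.univ.filter (fun i => ¬ ((1 - ε) * t ≤ μ i)), f i with hSmall
  have hsplit : Big + Small = ∑ i, f i := by
    rw [hBig, hSmall, hS]
    exact Finset.sum_filter_add_sum_filter_not _ _ _
  have hBig_ge : (x₀ ⬝ᵥ v top) ^ 2 * t ^ (2 * k) ≤ Big := by
    have := Finset.single_le_sum (fun i _ => hfnn i) htopS
    simpa [hf, ht] using this
  have hBigpos : 0 < Big := lt_of_lt_of_le (by positivity) hBig_ge
  have hSmall_le : Small ≤ ((1 - ε) * t) ^ (2 * k) * (x₀ ⬝ᵥ x₀) := by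
    rw [hSmall]
    calc ∑ i ∈ Finset.univ.filter (fun i => ¬ ((1 - ε) * t ≤ μ i)), f i
        ≤ ∑ i ∈ Finset.univ.filter (fun i => ¬ ((1 - ε) * t ≤ μ i)),
            ((1 - ε) * t) ^ (2 * k) * (x₀ ⬝ᵥ v i) ^ 2 := by
          refine Finset.sum_le_sum fun i hi => ?_
          rw [Finset.mem_filter] at hi
          have hlt : μ i ≤ (1 - ε) * t := le_of_not_ge hi.2
          have : μ i ^ (2 * k) ≤ ((1 - ε) * t) ^ (2 * k) :=
            pow_le_pow_left₀ (hμ0 i) hlt _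
          calc f i = μ i ^ (2 * k) * (x₀ ⬝ᵥ v i) ^ 2 := by rw [hf]; ring
            _ ≤ ((1 - ε) * t) ^ (2 * k) * (x₀ ⬝ᵥ v i) ^ 2 :=
                mul_le_mul_of_nonneg_right this (sq_nonneg _)
      _ ≤ ∑ i, ((1 - ε) * t) ^ (2 * k) * (x₀ ⬝ᵥ v i) ^ 2 := by
          refine Finset.sum_le_sum_of_subset_of_nonneg (Finset.filter_subset _ _)
            fun i _ _ => mul_nonneg ((even_two_mul k).pow_nonneg _) (sq_nonneg _)
      _ = ((1 - ε) * t) ^ (2 * k) * (x₀ ⬝ᵥ x₀) := by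
          rw [hX, Finset.mul_sum]
  have hNum_ge : (1 - ε) * t * Big ≤ ∑ i, f i * μ i := by
    have h1 : ∑ i ∈ S, (1 - ε) * t * f i ≤ ∑ i ∈ S, f i * μ i := by
      refine Finset.sum_le_sum fun i hi => ?_
      rw [hS, Finset.mem_filter] at hi
      calc (1 - ε) * t * f i ≤ μ i * f i :=
            mul_le_mul_of_nonneg_right hi.2 (hfnn i)
        _ = f i * μ i := mul_comm _ _
    have h2 : ∑ i ∈ S, f i * μ i ≤ ∑ i, f i * μ i :=
      Finset.sum_le_sum_of_subset_of_nonneg (Finset.filter_subset _ _)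
        fun i _ _ => mul_nonneg (hfnn i) (hμ0 i)
    calc (1 - ε) * t * Big = ∑ i ∈ S, (1 - ε) * t * f i := by
          rw [hBig, Finset.mul_sum]
      _ ≤ ∑ i, f i * μ i := le_trans h1 h2
  -- key denominator bound
  set q := (x₀ ⬝ᵥ x₀) / (x₀ ⬝ᵥ v top) ^ 2 * (1 - ε) ^ (2 * k) with hqdef
  have hkey : Small ≤ Big * q := by
    have e1 : (x₀ ⬝ᵥ v top) ^ 2 * t ^ (2 * k) * q = (x₀ ⬝ᵥ x₀) * ((1 - ε) * t) ^ (2 * k) := by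
      rw [hqdef, mul_pow]
      field_simp
    have e2 : (x₀ ⬝ᵥ v top) ^ 2 * t ^ (2 * k) * q ≤ Big * q :=
      mul_le_mul_of_nonneg_right hBig_ge hq0
    calc Small ≤ ((1 - ε) * t) ^ (2 * k) * (x₀ ⬝ᵥ x₀) := hSmall_le
      _ = (x₀ ⬝ᵥ v top) ^ 2 * t ^ (2 * k) * q := by rw [e1]; ring
      _ ≤ Big * q := e2
  have hDle : xk ⬝ᵥ xk ≤ Big * (1 + q) := by
    rw [hD, ← hsplit]
    nlinarith [hkey]
  have step1 : (1 - ε) * t * (1 / (1 + q)) ≤ (1 - ε) * t * Big / (xk ⬝ᵥ xk) := by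
    rw [mul_one_div, div_le_div_iff₀ h1q hDpos]
    have hat : 0 ≤ (1 - ε) * t := mul_nonneg (by linarith) hμt.le
    calc (1 - ε) * t * (xk ⬝ᵥ xk) ≤ (1 - ε) * t * (Big * (1 + q)) :=
          mul_le_mul_of_nonneg_left hDle hat
      _ = (1 - ε) * t * Big * (1 + q) := by ring
  have step2 : (1 - ε) * t * Big / (xk ⬝ᵥ xk) ≤ xk ⬝ᵥ M *ᵥ xk / (xk ⬝ᵥ xk) := by
    refine (div_le_div_iff_of_pos_right hDpos).mpr ?_
    rw [hNum]
    exact hNum_ge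
  exact le_trans step1 step2
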